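/- For any real numbers $0 \le x \le 1$ and $\kappa > 0$, we have $(1-x)^{\kappa} \ge e^{-\kappa x} - \frac{1}{e\kappa}$. -/

import Mathlib

lemma key_te (t : ℝ) : t * Real.exp (-t) ≤ 1 / Real.exp 1 := by
  have h := Real.add_one_le_exp (t - 1)
  rw [Real.exp_sub] at h
  have hp := Real.exp_pos t
  have hp1 := Real.exp_pos 1
  calc t * Real.exp (-t) ≤ (Real.exp t / Real.exp 1) * Real.exp (-t) := by
        apply mul_le_mul_of_nonneg_right _ (Real.exp_nonneg _)
        linarith
    _ = 1 / Real.exp 1 := by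
        rw [Real.exp_neg]
        field_simp

lemma key_te' (t : ℝ) : t * Real.exp (-t) * Real.exp 1 ≤ 1 := by
  have h2 : t * Real.exp (-t) * Real.exp 1 ≤ (1 / Real.exp 1) * Real.exp 1 :=
    mul_le_mul_of_nonneg_right (key_te t) (Real.exp_nonneg 1)
  rwa [one_div_mul_cancel (Real.exp_ne_zero 1)] at h2

theorem stmt0 (x κ : ℝ) (hx0 : 0 ≤ x) (hx1 : x ≤ 1) (hκ : 0 < κ) :
    (1 - x) ^ κ ≥ Real.exp (-(κ * x)) - 1 / (Real.exp 1 * κ) := by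
  set f : ℝ → ℝ := fun y => Real.exp (-(κ * y)) - (1 - y) ^ κ with hf
  have hcont : ContinuousOn f (Set.Icc (0:ℝ) 1) := by
    apply ContinuousOn.sub
    · exact (Real.continuous_exp.comp (continuous_const.mul continuous_id).neg).continuousOn
    · apply Continuous.continuousOn
      have h1 : Continuous fun z : ℝ => z ^ κ := by
        rw [continuous_iff_continuousAt]
        intro z
        exact Real.continuousAt_rpow_const z κ (Or.inr hκ.le)
      exact h1.comp (continuous_const.sub continuous_id)
  obtain ⟨c, hc, hmax⟩ := isCompact_Icc.exists_isMaxOn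
    (Set.nonempty_Icc.mpr zero_le_one) hcont
  have hfx : f x ≤ f c := hmax ⟨hx0, hx1⟩
  have hpos : 0 < (1:ℝ) / (Real.exp 1 * κ) := by positivity
  suffices hfc : f c ≤ 1 / (Real.exp 1 * κ) by
    have hfin : f x ≤ 1 / (Real.exp 1 * κ) := le_trans hfx hfc
    simp only [hf] at hfin
    linarith
  rcases eq_or_lt_of_le hc.1 with h0 | h0
  · -- c = 0
    have hfc0 : f c = 0 := by
      simp only [hf, ← h0, mul_zero, neg_zero, Real.exp_zero, sub_zero, Real.one_rpow]
      ring
    rw [hfc0]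
    exact hpos.le
  rcases eq_or_lt_of_le hc.2 with h1 | h1
  · -- c = 1
    have hfc1 : f c = Real.exp (-κ) := by
      simp only [hf, h1, mul_one, sub_self, Real.zero_rpow hκ.ne']
      ring
    rw [hfc1, le_div_iff₀ (by positivity)]
    nlinarith [key_te' κ, Real.exp_pos (-κ), Real.exp_pos 1]
  · -- 0 < c < 1
    have h1c : (0:ℝ) < 1 - c := by linarith
    have hd1 : HasDerivAt (fun y : ℝ => Real.exp (-(κ * y)))
        (Real.exp (-(κ * c)) * (-κ)) c := by
      have : HasDerivAt (fun y : ℝ => -(κ * y)) (-κ) c := by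
        have h := ((hasDerivAt_id' c).const_mul κ).neg
        simp only [mul_one] at h
        exact h
      exact this.exp
    have hd2 : HasDerivAt (fun y : ℝ => (1 - y) ^ κ)
        (-1 * κ * (1 - c) ^ (κ - 1)) c := by
      have hinner : HasDerivAt (fun y : ℝ => 1 - y) (-1) c := by
        have h := (hasDerivAt_const c (1:ℝ)).sub (hasDerivAt_id' c)
        simp only [zero_sub] at h
        exact h
      simpa using hinner.rpow_const (p := κ) (Or.inl h1c.ne')
    have hd : HasDerivAt f
        (Real.exp (-(κ * c)) * (-κ) - (-1 * κ * (1 - c) ^ (κ - 1))) c := hd1.sub hd2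
    have hloc : IsLocalMax f c := hmax.isLocalMax (Icc_mem_nhds h0 h1)
    have hzero := hloc.hasDerivAt_eq_zero hd
    have hcrit : (1 - c) ^ (κ - 1) = Real.exp (-(κ * c)) := by
      have h' : κ * (1 - c) ^ (κ - 1) = κ * Real.exp (-(κ * c)) := by nlinarith [hzero]
      exact mul_left_cancel₀ hκ.ne' h'
    have hpow : (1 - c) ^ κ = (1 - c) ^ (κ - 1) * (1 - c) := by
      have h2 := Real.rpow_add h1c (κ - 1) 1
      rw [Real.rpow_one] at h2
      rw [show κ - 1 + 1 = κ from by ring] at h2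
      exact h2
    have hfc : f c = c * Real.exp (-(κ * c)) := by
      simp only [hf]
      rw [hpow, hcrit]
      ring
    rw [hfc, le_div_iff₀ (by positivity)]
    nlinarith [key_te' (κ * c), Real.exp_pos (-(κ * c)), Real.exp_pos 1]
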